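/- No feed-forward exponential architecture can encode the concept of "even number" (exponential instance of the paper's Proposition): Let E be the smallest set of functions ℝ → ℝ that contains every constant function and the identity function, and is closed under pointwise addition, pointwise multiplication, and exponentiation f ↦ (fun x => Real.exp (f x)). Then no f ∈ E satisfies f (2·n) ≥ 1/2 and f (2·n + 1) < 1/2 for all n : ℕ; that is, no such function can partition arbitrarily large numbers into even and odd. -/

import Mathlib

/-- The class of nested exponential polynomials: the smallest set of functions
`ℝ → ℝ` containing every constant function and the identity, and closed under
pointwise addition, pointwise multiplication, and exponentiation
`f ↦ fun x => Real.exp (f x)`. -/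
inductive ExpPoly : (ℝ → ℝ) → Prop
  | const (c : ℝ) : ExpPoly (fun _ => c)
  | id : ExpPoly (fun x => x)
  | add {f g : ℝ → ℝ} : ExpPoly f → ExpPoly g → ExpPoly (fun x => f x + g x)
  | mul {f g : ℝ → ℝ} : ExpPoly f → ExpPoly g → ExpPoly (fun x => f x * g x)
  | exp {f : ℝ → ℝ} : ExpPoly f → ExpPoly (fun x => Real.exp (f x))


open Filter Real Set List

def EvSign (f : ℝ → ℝ) : Prop :=
  (∀ᶠ x in atTop, f x = 0) ∨ (∀ᶠ x in atTop, f x ≠ 0)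

structure Good (S : Set (ℝ → ℝ)) : Prop where
  const : ∀ c : ℝ, (fun _ => c) ∈ S
  add : ∀ f g : ℝ → ℝ, f ∈ S → g ∈ S → (fun x => f x + g x) ∈ S
  mul : ∀ f g : ℝ → ℝ, f ∈ S → g ∈ S → (fun x => f x * g x) ∈ S
  diff : ∀ f ∈ S, Differentiable ℝ f
  deriv_mem : ∀ f ∈ S, deriv f ∈ S
  evsign : ∀ f ∈ S, EvSign f

theorem Good.neg {S} (hS : Good S) {f} (hf : f ∈ S) : (fun x => -f x) ∈ S := by
  simpa using hS.mul _ _ (hS.const (-1)) hf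

theorem Good.sub {S} (hS : Good S) {f g} (hf : f ∈ S) (hg : g ∈ S) :
    (fun x => f x - g x) ∈ S := by
  simpa [sub_eq_add_neg] using hS.add _ _ hf (hS.neg hg)

/-- finite sums of `a·exp h` -/
noncomputable def comb (l : List ((ℝ → ℝ) × (ℝ → ℝ))) : ℝ → ℝ :=
  fun x => (l.map fun p => p.1 x * Real.exp (p.2 x)).sum

lemma comb_nil (x : ℝ) : comb [] x = 0 := rfl

lemma comb_cons (p : (ℝ → ℝ) × (ℝ → ℝ)) (t) (x : ℝ) :
    comb (p :: t) x = p.1 x * Real.exp (p.2 x) + comb t x := by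
  simp [comb]

lemma comb_append (l m) (x : ℝ) : comb (l ++ m) x = comb l x + comb m x := by
  simp [comb]

/-- multiplying a combination by `exp h` after shifting exponents down by `h` -/
lemma comb_unshift (t : List ((ℝ → ℝ) × (ℝ → ℝ))) (h : ℝ → ℝ) (x : ℝ) :
    comb (t.map fun q => (q.1, fun y => q.2 y - h y)) x * Real.exp (h x) = comb t x := by
  induction t with
  | nil => simp [comb]
  | cons q t ih =>
    rw [List.map_cons, comb_cons, comb_cons, add_mul, ih]
    congr 1
    show q.1 x * Real.exp (q.2 x - h x) * Real.exp (h x) = _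
    rw [mul_assoc, ← Real.exp_add, sub_add_cancel]

noncomputable def dstep (p : (ℝ → ℝ) × (ℝ → ℝ)) : (ℝ → ℝ) × (ℝ → ℝ) :=
  (fun x => deriv p.1 x + p.1 x * deriv p.2 x, p.2)

lemma comb_hasDerivAt (l : List ((ℝ → ℝ) × (ℝ → ℝ)))
    (hl : ∀ p ∈ l, Differentiable ℝ p.1 ∧ Differentiable ℝ p.2) (x : ℝ) :
    HasDerivAt (comb l) (comb (l.map dstep) x) x := by
  induction l with
  | nil =>
    rw [show comb [] = fun _ => (0:ℝ) from funext comb_nil]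
    simpa [comb] using (hasDerivAt_const x (0:ℝ))
  | cons p t ih =>
    have hp := hl p (List.mem_cons_self)
    have h1 : HasDerivAt p.1 (deriv p.1 x) x := (hp.1 x).hasDerivAt
    have h2 : HasDerivAt (fun y => Real.exp (p.2 y)) (Real.exp (p.2 x) * deriv p.2 x) x :=
      (hp.2 x).hasDerivAt.exp
    have h4 : HasDerivAt (fun y => p.1 y * Real.exp (p.2 y) + comb t y)
        (deriv p.1 x * Real.exp (p.2 x) + p.1 x * (Real.exp (p.2 x) * deriv p.2 x)
          + comb (List.map dstep t) x) x := (h1.mul h2).add (ih fun q hq => hl q (List.mem_cons_of_mem _ hq))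
    have hfun : comb (p :: t) = fun y => p.1 y * Real.exp (p.2 y) + comb t y := by
      funext y; rw [comb_cons]
    rw [hfun, List.map_cons, comb_cons]
    convert h4 using 1
    simp [dstep]; ring

lemma comb_differentiable (l) (hl : ∀ p ∈ l, Differentiable ℝ p.1 ∧ Differentiable ℝ p.2) :
    Differentiable ℝ (comb l) := fun x => (comb_hasDerivAt l hl x).differentiableAt

lemma comb_deriv (l) (hl : ∀ p ∈ l, Differentiable ℝ p.1 ∧ Differentiable ℝ p.2) :
    deriv (comb l) = comb (l.map dstep) :=
  funext fun x => (comb_hasDerivAt l hl x).deriv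

def mulPair (p q : (ℝ → ℝ) × (ℝ → ℝ)) : (ℝ → ℝ) × (ℝ → ℝ) :=
  (fun y => p.1 y * q.1 y, fun y => p.2 y + q.2 y)

lemma comb_smul (p : (ℝ → ℝ) × (ℝ → ℝ)) (m) (x : ℝ) :
    p.1 x * Real.exp (p.2 x) * comb m x = comb (m.map (mulPair p)) x := by
  induction m with
  | nil => simp [comb]
  | cons q t ih =>
    rw [comb_cons, List.map_cons, comb_cons, mul_add, ih]
    simp [mulPair, Real.exp_add]; ring

lemma comb_mul (l m) (x : ℝ) :
    comb l x * comb m x = comb (l.flatMap fun p => m.map (mulPair p)) x := by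
  induction l with
  | nil => simp [comb]
  | cons p t ih =>
    rw [comb_cons, List.flatMap_cons, comb_append, add_mul, ih, comb_smul]

lemma comb_linear (u v : ℝ → ℝ) (t : List ((ℝ → ℝ) × (ℝ → ℝ))) (x : ℝ) :
    comb (t.map fun q => (fun y =>
        u y * (deriv q.1 y + q.1 y * deriv q.2 y) - v y * q.1 y, q.2)) x
      = u x * comb (t.map dstep) x - v x * comb t x := by
  induction t with
  | nil => simp [comb]
  | cons q t ih =>
    simp only [List.map_cons, comb_cons, ih, dstep]
    ring

theorem evsign_comb {S : Set (ℝ → ℝ)} (hS : Good S) :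
    ∀ (n : ℕ) (l : List ((ℝ → ℝ) × (ℝ → ℝ))), l.length = n →
      (∀ p ∈ l, p.1 ∈ S ∧ p.2 ∈ S) → EvSign (comb l) := by
  intro n
  induction n using Nat.strong_induction_on with
  | _ n IH =>
    intro l hlen hl
    cases l with
    | nil => exact Or.inl (Eventually.of_forall fun x => comb_nil x)
    | cons p t =>
      obtain ⟨a, h⟩ := p
      have haS : a ∈ S := (hl (a, h) (List.mem_cons_self)).1
      have hhS : h ∈ S := (hl (a, h) (List.mem_cons_self)).2
      set t' : List ((ℝ → ℝ) × (ℝ → ℝ)) :=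
        t.map fun q => (q.1, fun y => q.2 y - h y) with ht'
      have ht'mem : ∀ q ∈ t', q.1 ∈ S ∧ q.2 ∈ S := by
        intro q hq
        rw [ht', List.mem_map] at hq
        obtain ⟨r, hr, rfl⟩ := hq
        have := hl r (List.mem_cons_of_mem _ hr)
        exact ⟨this.1, hS.sub this.2 hhS⟩
      have ht'len : t'.length < n := by
        rw [ht', List.length_map]
        simp only [List.length_cons] at hlen
        omega
      set G : ℝ → ℝ := fun x => a x + comb t' x with hG
      have hFG : ∀ x, comb ((a, h) :: t) x = G x * Real.exp (h x) := by
        intro x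
        rw [comb_cons, hG, add_mul, comb_unshift t h x]
      suffices hGsign : EvSign G by
        rcases hGsign with h0 | hne
        · exact Or.inl (h0.mono fun x hx => by rw [hFG x, hx, zero_mul])
        · exact Or.inr (hne.mono fun x hx => by
            rw [hFG x]; exact mul_ne_zero hx (Real.exp_ne_zero _))
      rcases hS.evsign a haS with ha0 | hane
      · -- a eventually 0
        rcases IH t'.length ht'len t' rfl ht'mem with h1 | h1
        · exact Or.inl ((ha0.and h1).mono fun x hx => by
            rw [hG]; simp only []; rw [hx.1, hx.2, add_zero])
        · exact Or.inr ((ha0.and h1).mono fun x hx => by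
            rw [hG]; simp only []; rw [hx.1, zero_add]; exact hx.2)
      · -- a eventually nonzero
        by_cases hGne : ∀ᶠ x in atTop, G x ≠ 0
        · exact Or.inr hGne
        · have hfreq : ∃ᶠ x in atTop, G x = 0 := by
            rw [Filter.not_eventually] at hGne
            simpa using hGne
          have hadiff : Differentiable ℝ a := hS.diff a haS
          have hdt' : ∀ q ∈ t', Differentiable ℝ q.1 ∧ Differentiable ℝ q.2 :=
            fun q hq => ⟨hS.diff _ (ht'mem q hq).1, hS.diff _ (ht'mem q hq).2⟩
          have hGdiff : Differentiable ℝ G :=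
            hadiff.add (comb_differentiable t' hdt')
          have hGderiv : ∀ x, HasDerivAt G (deriv a x + comb (t'.map dstep) x) x :=
            fun x => ((hadiff x).hasDerivAt).add (comb_hasDerivAt t' hdt' x)
          set t'' : List ((ℝ → ℝ) × (ℝ → ℝ)) :=
            t'.map fun q => (fun y =>
              a y * (deriv q.1 y + q.1 y * deriv q.2 y) - deriv a y * q.1 y, q.2) with ht''
          set D : ℝ → ℝ := comb t'' with hDdef
          have ht''mem : ∀ q ∈ t'', q.1 ∈ S ∧ q.2 ∈ S := by
            intro q hq
            rw [ht'', List.mem_map] at hq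
            obtain ⟨r, hr, rfl⟩ := hq
            obtain ⟨hr1, hr2⟩ := ht'mem r hr
            refine ⟨?_, hr2⟩
            exact hS.sub (hS.mul _ _ haS (hS.add _ _ (hS.deriv_mem _ hr1)
              (hS.mul _ _ hr1 (hS.deriv_mem _ hr2))))
              (hS.mul _ _ (hS.deriv_mem _ haS) hr1)
          have hD : ∀ x, D x = a x * deriv G x - deriv a x * G x := by
            intro x
            have hdG : deriv G x = deriv a x + comb (t'.map dstep) x := (hGderiv x).deriv
            rw [hDdef, ht'', comb_linear, hdG, hG]
            ring
          have hDev : EvSign D := by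
            refine IH t''.length ?_ t'' rfl ht''mem
            rw [ht'', List.length_map]
            exact ht'len
          have hDfreq : ∃ᶠ x in atTop, D x = 0 := by
            rw [frequently_atTop] at hfreq ⊢
            intro N
            obtain ⟨M, hM⟩ := eventually_atTop.1 hane
            obtain ⟨x1, hx1ge, hx1⟩ := hfreq (max N M)
            obtain ⟨x2, hx2ge, hx2⟩ := hfreq (x1 + 1)
            have hlt : x1 < x2 := lt_of_lt_of_le (lt_add_one x1) hx2ge
            have hane' : ∀ x ∈ Icc x1 x2, a x ≠ 0 := fun x hx =>
              hM x (le_trans (le_trans (le_max_right _ _) hx1ge) hx.1)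
            have hcont : ContinuousOn (fun y => G y / a y) (Icc x1 x2) :=
              (hGdiff.continuous.continuousOn).div
                (hadiff.continuous.continuousOn) hane'
            have hder : ∀ x ∈ Ioo x1 x2, HasDerivAt (fun y => G y / a y)
                ((deriv G x * a x - G x * deriv a x) / (a x) ^ 2) x := fun x hx =>
              ((hGdiff x).hasDerivAt).div ((hadiff x).hasDerivAt)
                (hane' x (Ioo_subset_Icc_self hx))
            have heq : G x1 / a x1 = G x2 / a x2 := by rw [hx1, hx2]; simp
            obtain ⟨c, hc, hc0⟩ := exists_hasDerivAt_eq_zero hlt hcont heq hder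
            refine ⟨c, le_trans (le_trans (le_max_left _ _) hx1ge) (le_of_lt hc.1), ?_⟩
            have hnum : deriv G c * a c - G c * deriv a c = 0 := by
              have hac : a c ≠ 0 := hane' c (Ioo_subset_Icc_self hc)
              have := (div_eq_zero_iff.1 hc0)
              rcases this with h' | h'
              · exact h'
              · exact absurd h' (pow_ne_zero 2 hac)
            rw [hD]; linarith [hnum]
          have hD0 : ∀ᶠ x in atTop, D x = 0 := by
            rcases hDev with h' | h'
            · exact h'
            · obtain ⟨x, hx1, hx2⟩ := (hDfreq.and_eventually h').exists
              exact absurd hx1 hx2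
          obtain ⟨M, hM⟩ := eventually_atTop.1 (hD0.and hane)
          have hconst : ∀ x ≥ M, G x * a M = G M * a x := by
            intro x hx
            rcases eq_or_lt_of_le hx with heq | hlt
            · rw [← heq]
            · have hane' : ∀ y ∈ Icc M x, a y ≠ 0 := fun y hy => (hM y hy.1).2
              have hcont : ContinuousOn (fun y => G y / a y) (Icc M x) :=
                (hGdiff.continuous.continuousOn).div
                  (hadiff.continuous.continuousOn) hane'
              have hder : ∀ y ∈ Ioo M x, HasDerivAt (fun z => G z / a z)
                  ((fun z => (deriv G z * a z - G z * deriv a z) / (a z) ^ 2) y) y :=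
                fun y hy => ((hGdiff y).hasDerivAt).div ((hadiff y).hasDerivAt)
                  (hane' y (Ioo_subset_Icc_self hy))
              obtain ⟨c, hc, hceq⟩ := exists_hasDerivAt_eq_slope
                (fun y => G y / a y) _ hlt hcont hder
              have hDc : D c = 0 := (hM c (le_of_lt hc.1)).1
              have hnum : deriv G c * a c - G c * deriv a c = 0 := by
                have := hD c; rw [hDc] at this; linarith
              rw [hnum, zero_div] at hceq
              have hxM : x - M ≠ 0 := sub_ne_zero.2 (ne_of_gt hlt)
              have : G x / a x = G M / a M := by
                have := (div_eq_zero_iff.1 hceq.symm)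
                rcases this with h' | h'
                · linarith [sub_eq_zero.1 h']
                · exact absurd h' hxM
              have haM : a M ≠ 0 := (hM M le_rfl).2
              have hax : a x ≠ 0 := (hM x hx).2
              field_simp at this
              linarith [this]
          by_cases hGM : G M = 0
          · refine Or.inl (eventually_atTop.2 ⟨M, fun x hx => ?_⟩)
            have := hconst x hx
            rw [hGM, zero_mul] at this
            have haM : a M ≠ 0 := (hM M le_rfl).2
            exact (mul_eq_zero.1 this).resolve_right haM
          · exfalso
            obtain ⟨x, hxM, hx0⟩ := (frequently_atTop.1 hfreq) M
            have := hconst x hxM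
            rw [hx0, zero_mul] at this
            have hax : a x ≠ 0 := (hM x hxM).2
            exact hGM ((mul_eq_zero.1 this.symm).resolve_right hax)

def Layer (S : Set (ℝ → ℝ)) : Set (ℝ → ℝ) :=
  {f | ∃ l : List ((ℝ → ℝ) × (ℝ → ℝ)), (∀ p ∈ l, p.1 ∈ S ∧ p.2 ∈ S) ∧ f = comb l}

theorem good_layer {S : Set (ℝ → ℝ)} (hS : Good S) : Good (Layer S) := by
  constructor
  · intro c
    refine ⟨[(fun _ => c, fun _ => 0)], fun p hp => ?_, ?_⟩
    · rw [List.mem_singleton] at hp; subst hp; exact ⟨hS.const c, hS.const 0⟩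
    · funext x; simp [comb]
  · rintro f g ⟨l, hlm, rfl⟩ ⟨m, hmm, rfl⟩
    exact ⟨l ++ m, fun p hp => by
      rcases List.mem_append.1 hp with h | h
      exacts [hlm p h, hmm p h], funext fun x => (comb_append l m x).symm⟩
  · rintro f g ⟨l, hlm, rfl⟩ ⟨m, hmm, rfl⟩
    refine ⟨l.flatMap fun p => m.map (mulPair p), fun q hq => ?_,
      funext fun x => comb_mul l m x⟩
    rw [List.mem_flatMap] at hq
    obtain ⟨p, hp, hq⟩ := hq
    rw [List.mem_map] at hq
    obtain ⟨r, hr, rfl⟩ := hq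
    exact ⟨hS.mul _ _ (hlm p hp).1 (hmm r hr).1, hS.add _ _ (hlm p hp).2 (hmm r hr).2⟩
  · rintro f ⟨l, hlm, rfl⟩
    exact comb_differentiable l fun p hp =>
      ⟨hS.diff _ (hlm p hp).1, hS.diff _ (hlm p hp).2⟩
  · rintro f ⟨l, hlm, rfl⟩
    refine ⟨l.map dstep, fun q hq => ?_, ?_⟩
    · rw [List.mem_map] at hq
      obtain ⟨p, hp, rfl⟩ := hq
      exact ⟨hS.add _ _ (hS.deriv_mem _ (hlm p hp).1)
        (hS.mul _ _ (hlm p hp).1 (hS.deriv_mem _ (hlm p hp).2)), (hlm p hp).2⟩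
    · exact comb_deriv l fun p hp => ⟨hS.diff _ (hlm p hp).1, hS.diff _ (hlm p hp).2⟩
  · rintro f ⟨l, hlm, rfl⟩
    exact evsign_comb hS l.length l rfl hlm

theorem subset_layer (S : Set (ℝ → ℝ)) (hS : Good S) : S ⊆ Layer S := by
  intro f hf
  refine ⟨[(f, fun _ => 0)], fun p hp => ?_, ?_⟩
  · rw [List.mem_singleton] at hp; subst hp; exact ⟨hf, hS.const 0⟩
  · funext x; simp [comb]

def P0 : Set (ℝ → ℝ) := {f | ∃ p : Polynomial ℝ, f = fun x => p.eval x}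

theorem good_P0 : Good P0 := by
  constructor
  · exact fun c => ⟨Polynomial.C c, by funext x; simp⟩
  · rintro f g ⟨p, rfl⟩ ⟨q, rfl⟩; exact ⟨p + q, by funext x; simp⟩
  · rintro f g ⟨p, rfl⟩ ⟨q, rfl⟩; exact ⟨p * q, by funext x; simp⟩
  · rintro f ⟨p, rfl⟩; exact p.differentiable
  · rintro f ⟨p, rfl⟩
    exact ⟨p.derivative, funext fun x => by rw [Polynomial.deriv]⟩
  · rintro f ⟨p, rfl⟩
    by_cases hp : p = 0
    · exact Or.inl (Eventually.of_forall fun x => by simp [hp])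
    · right
      have hfin : {x : ℝ | p.IsRoot x}.Finite := Polynomial.finite_setOf_isRoot hp
      obtain ⟨b, hb⟩ := hfin.bddAbove
      refine eventually_atTop.2 ⟨b + 1, fun x hx hroot => ?_⟩
      have hmem : x ∈ {x : ℝ | p.IsRoot x} := hroot
      have := hb hmem
      linarith

noncomputable def Lvl : ℕ → Set (ℝ → ℝ)
  | 0 => P0
  | n + 1 => Layer (Lvl n)

theorem good_Lvl : ∀ n, Good (Lvl n)
  | 0 => good_P0
  | n + 1 => good_layer (good_Lvl n)

theorem lvl_succ_mono (n : ℕ) : Lvl n ⊆ Lvl (n + 1) := subset_layer _ (good_Lvl n)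

theorem lvl_mono : ∀ {m n : ℕ}, m ≤ n → Lvl m ⊆ Lvl n := by
  intro m n h
  induction h with
  | refl => exact fun _ h => h
  | step _ ih => exact fun f hf => lvl_succ_mono _ (ih hf)

theorem expPoly_mem_lvl {f : ℝ → ℝ} (hf : ExpPoly f) : ∃ n, f ∈ Lvl n := by
  induction hf with
  | const c => exact ⟨0, Polynomial.C c, by funext x; simp⟩
  | id => exact ⟨0, Polynomial.X, by funext x; simp⟩
  | add hf hg ihf ihg =>
    obtain ⟨m, hm⟩ := ihf; obtain ⟨k, hk⟩ := ihg
    exact ⟨max m k, (good_Lvl _).add _ _ (lvl_mono (le_max_left m k) hm)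
      (lvl_mono (le_max_right m k) hk)⟩
  | mul hf hg ihf ihg =>
    obtain ⟨m, hm⟩ := ihf; obtain ⟨k, hk⟩ := ihg
    exact ⟨max m k, (good_Lvl _).mul _ _ (lvl_mono (le_max_left m k) hm)
      (lvl_mono (le_max_right m k) hk)⟩
  | @exp g hg ihg =>
    obtain ⟨m, hm⟩ := ihg
    refine ⟨m + 1, [(fun _ => (1:ℝ), g)], fun p hp => ?_, ?_⟩
    · rw [List.mem_singleton] at hp; subst hp; exact ⟨(good_Lvl m).const 1, hm⟩
    · funext x; simp [comb]

/-- **No feed-forward exponential architecture can encode the concept of "even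
number".**  No nested exponential polynomial `f` satisfies `f (2·n) ≥ 1/2` and
`f (2·n + 1) < 1/2` for all `n : ℕ`; that is, no such function can partition
arbitrarily large numbers into even and odd. -/
theorem expPoly_cannot_encode_even (f : ℝ → ℝ) (hf : ExpPoly f) :
    ¬ (∀ n : ℕ, f (2 * n) ≥ 1 / 2 ∧ f (2 * n + 1) < 1 / 2) := by
  intro hc
  obtain ⟨n, hfn⟩ := expPoly_mem_lvl hf
  have hgood := good_Lvl n
  have hg : (fun x => f x + (-(1/2) : ℝ)) ∈ Lvl n := hgood.add _ _ hfn (hgood.const _)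
  have hcont : Continuous (fun x => f x + (-(1/2) : ℝ)) := (hgood.diff _ hg).continuous
  rcases hgood.evsign _ hg with h0 | hne
  · obtain ⟨M, hM⟩ := eventually_atTop.1 h0
    obtain ⟨k, hk⟩ := exists_nat_ge M
    have hk0 : (0:ℝ) ≤ (k:ℝ) := Nat.cast_nonneg k
    have h1 := hM (2 * (k:ℝ) + 1) (by linarith)
    have h2 := (hc k).2
    simp only [] at h1
    linarith
  · obtain ⟨M, hM⟩ := eventually_atTop.1 hne
    obtain ⟨k, hk⟩ := exists_nat_ge M
    have hk0 : (0:ℝ) ≤ (k:ℝ) := Nat.cast_nonneg k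
    have h1 : (0:ℝ) ≤ f (2 * (k:ℝ)) + (-(1/2)) := by have := (hc k).1; linarith
    have h2 : f (2 * (k:ℝ) + 1) + (-(1/2)) < 0 := by have := (hc k).2; linarith
    have hsub := intermediate_value_Icc' (by linarith : (2*(k:ℝ)) ≤ 2*(k:ℝ)+1)
      hcont.continuousOn
    obtain ⟨c, hcmem, hc0⟩ := hsub (⟨le_of_lt h2, h1⟩ :
      (0:ℝ) ∈ Icc (f (2*(k:ℝ)+1) + (-(1/2))) (f (2*(k:ℝ)) + (-(1/2))))
    exact hM c (by linarith [hcmem.1] : M ≤ c) hc0
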